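/- Let G ~ Exp(1) and P_j ~ Uniform[0, P_max] be independent, P_max > 0, φ > 0, and Γ ≥ 0. Then P(G·P_j > Γ/φ) = e^{-Γ/(φP_max)} + (Γ/(φP_max))·Ei(-Γ/(φP_max)), where Ei(x) = -∫_{-x}^∞ e^{-t}/t dt is the exponential integral; and if Γ < 0 the probability is 1. -/

import Mathlib

open MeasureTheory ProbabilityTheory Real

open Set
open scoped ENNReal


lemma aux_int_exp (a : ℝ) : IntegrableOn (fun x => Real.exp (-x)) (Ioi a) := by
  simpa using exp_neg_integrableOn_Ioi a one_pos

lemma aux_int_exp_div (a : ℝ) (ha : 0 < a) :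
    IntegrableOn (fun x => Real.exp (-x) / x) (Ioi a) := by
  refine Integrable.mono ((aux_int_exp a).const_mul a⁻¹) ?_ ?_
  · exact ((Real.measurable_exp.comp measurable_neg).div measurable_id).aestronglyMeasurable
  · filter_upwards [ae_restrict_mem measurableSet_Ioi] with x hx
    have hx0 : 0 < x := ha.trans hx
    rw [Real.norm_eq_abs, Real.norm_eq_abs, abs_of_nonneg (by positivity),
      abs_of_nonneg (by positivity)]
    rw [div_eq_mul_inv, mul_comm]
    gcongr
    exact hx.le

lemma aux_int_main (a : ℝ) (ha : 0 < a) :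
    IntegrableOn (fun x => (1 - a / x) * Real.exp (-x)) (Ioi a) := by
  refine IntegrableOn.congr_fun ((aux_int_exp a).sub ((aux_int_exp_div a ha).const_mul a))
    (fun x hx => ?_) measurableSet_Ioi
  have : x ≠ 0 := (ha.trans hx).ne'
  simp only [Pi.sub_apply]
  field_simp

lemma aux_slice (Pmax c : ℝ) (hc : 0 < c) (x : ℝ) :
    (volume[|Icc 0 Pmax]) {y | c < x * y}
      = if 0 < x then (ENNReal.ofReal Pmax)⁻¹ * ENNReal.ofReal (Pmax - c / x) else 0 := by
  rw [cond_apply measurableSet_Icc, Real.volume_Icc, sub_zero]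
  split_ifs with hx
  · congr 1
    have : Icc 0 Pmax ∩ {y | c < x * y} = Ioc (c / x) Pmax := by
      ext y
      simp only [mem_inter_iff, mem_Icc, mem_setOf_eq, mem_Ioc]
      rw [div_lt_iff₀ hx] at *
      constructor
      · rintro ⟨⟨_, h2⟩, h3⟩; exact ⟨by linarith [mul_comm x y], h2⟩
      · rintro ⟨h1, h2⟩
        have hy : 0 < y := by
          rcases lt_or_ge 0 y with h | h
          · exact h
          · nlinarith
        exact ⟨⟨hy.le, h2⟩, by linarith [mul_comm x y]⟩
    rw [this, Real.volume_Ioc]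
  · have he : Icc 0 Pmax ∩ {y | c < x * y} = ∅ := by
      ext y
      simp only [mem_inter_iff, mem_Icc, mem_setOf_eq, mem_empty_iff_false, iff_false, not_and]
      rintro ⟨hy0, _⟩ hcy
      push_neg at hx
      nlinarith
    rw [he, measure_empty, mul_zero]

lemma aux_prod (Pmax c : ℝ) (hPmax : 0 < Pmax) (hc : 0 < c) :
    ((expMeasure 1).prod (volume[|Icc 0 Pmax])) {p : ℝ × ℝ | c < p.1 * p.2}
      = ENNReal.ofReal (∫ x in Ioi (c / Pmax), (1 - (c / Pmax) / x) * Real.exp (-x)) := by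
  set a : ℝ := c / Pmax with ha_def
  have ha : 0 < a := div_pos hc hPmax
  have hS : MeasurableSet {p : ℝ × ℝ | c < p.1 * p.2} :=
    measurableSet_lt measurable_const (measurable_fst.mul measurable_snd)
  rw [Measure.prod_apply hS]
  have hslice : ∀ x : ℝ, (volume[|Icc 0 Pmax]) (Prod.mk x ⁻¹' {p : ℝ × ℝ | c < p.1 * p.2})
      = if 0 < x then (ENNReal.ofReal Pmax)⁻¹ * ENNReal.ofReal (Pmax - c / x) else 0 :=
    fun x => aux_slice Pmax c hc x
  rw [lintegral_congr hslice]
  have hexp : expMeasure 1 = volume.withDensity (exponentialPDF 1) := rfl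
  have hgm : Measurable (fun x : ℝ =>
      if 0 < x then (ENNReal.ofReal Pmax)⁻¹ * ENNReal.ofReal (Pmax - c / x) else 0) := by
    refine Measurable.ite (measurableSet_lt measurable_const measurable_id) ?_ measurable_const
    exact (measurable_const.sub (measurable_const.div measurable_id)).ennreal_ofReal.const_mul _
  have hpm : Measurable (exponentialPDF 1) :=
    (measurable_exponentialPDFReal 1).ennreal_ofReal
  rw [hexp, lintegral_withDensity_eq_lintegral_mul _ hpm hgm]
  set F : ℝ → ℝ≥0∞ := (exponentialPDF 1 * fun x : ℝ =>
      if 0 < x then (ENNReal.ofReal Pmax)⁻¹ * ENNReal.ofReal (Pmax - c / x) else 0) with hF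
  have hsplit : ∫⁻ x, F x = (∫⁻ x in Ioi a, F x) + ∫⁻ x in (Ioi a)ᶜ, F x :=
    (lintegral_add_compl F measurableSet_Ioi).symm
  have hzero : ∫⁻ x in (Ioi a)ᶜ, F x = 0 := by
    rw [compl_Ioi]
    rw [setLIntegral_congr_fun measurableSet_Iic (fun x hx => ?_), lintegral_zero]
    simp only [hF, Pi.mul_apply]
    by_cases hx0 : 0 < x
    · have hxa : x ≤ a := hx
      have : Pmax ≤ c / x := by
        rw [le_div_iff₀ hx0]
        calc Pmax * x ≤ Pmax * a := by nlinarith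
        _ = c := by rw [ha_def]; field_simp
      have h0 : ENNReal.ofReal (Pmax - c / x) = 0 := ENNReal.ofReal_eq_zero.mpr (by linarith)
      rw [if_pos hx0, h0, mul_zero, mul_zero]
    · rw [if_neg hx0, mul_zero]
  have hmain : ∫⁻ x in Ioi a, F x
      = ∫⁻ x in Ioi a, ENNReal.ofReal ((1 - a / x) * Real.exp (-x)) := by
    refine setLIntegral_congr_fun measurableSet_Ioi (fun x hx => ?_)
    have hx0 : 0 < x := ha.trans hx
    simp only [hF, Pi.mul_apply, if_pos hx0]
    rw [exponentialPDF_of_nonneg hx0.le, one_mul, one_mul]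
    have hnn : 0 ≤ 1 - a / x := by
      rw [sub_nonneg, div_le_one hx0]; exact hx.le
    rw [ENNReal.ofReal_mul hnn]
    have : ENNReal.ofReal (1 - a / x)
        = (ENNReal.ofReal Pmax)⁻¹ * ENNReal.ofReal (Pmax - c / x) := by
      rw [← ENNReal.div_eq_inv_mul, ← ENNReal.ofReal_div_of_pos hPmax]
      rw [ha_def, sub_div, div_self hPmax.ne', div_div, div_div, mul_comm]
    rw [this]
    ring
  rw [hsplit, hzero, add_zero, hmain,
    ← ofReal_integral_eq_lintegral_ofReal (aux_int_main a ha) ?_]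
  filter_upwards [ae_restrict_mem measurableSet_Ioi] with x hx
  have hx0 : 0 < x := ha.trans hx
  have : a / x ≤ 1 := by rw [div_le_one hx0]; exact hx.le
  exact mul_nonneg (by linarith) (Real.exp_pos _).le


/-- The exponential integral `Ei(x) = -∫_{-x}^∞ e^{-t}/t dt`. -/
noncomputable def Ei (x : ℝ) : ℝ := -∫ t in Set.Ioi (-x), Real.exp (-t) / t

lemma aux_key (a : ℝ) (ha : 0 < a) :
    ∫ x in Ioi a, (1 - a / x) * Real.exp (-x)
      = Real.exp (-a) + a * Ei (-a) := by
  have h1 : ∫ x in Ioi a, (1 - a / x) * Real.exp (-x)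
      = ∫ x in Ioi a, (Real.exp (-x) - a * (Real.exp (-x) / x)) := by
    refine setIntegral_congr_fun measurableSet_Ioi fun x hx => ?_
    have : x ≠ 0 := (ha.trans hx).ne'
    field_simp
  rw [h1, integral_sub (aux_int_exp a) ((aux_int_exp_div a ha).const_mul a),
    integral_const_mul, integral_exp_neg_Ioi]
  have : Ei (-a) = -∫ t in Ioi a, Real.exp (-t) / t := by
    simp [Ei]
  rw [this]
  ring


/-- Outage probability at Carol: `G ~ Exp(1)`, `P_j ~ Uniform[0, P_max]` independent;
`P(G·P_j > Γ/φ)` in closed form via the exponential integral. -/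
theorem stmt10 {Ω : Type*} [MeasurableSpace Ω] (μ : Measure Ω) [IsProbabilityMeasure μ]
    (G Pj : Ω → ℝ) (Pmax φ Γ : ℝ) (hPmax : 0 < Pmax) (hφ : 0 < φ)
    (hGm : Measurable G) (hPjm : Measurable Pj)
    (hind : IndepFun G Pj μ)
    (hG : μ.map G = expMeasure 1)
    (hPj : pdf.IsUniform Pj (Set.Icc 0 Pmax) μ) :
    (μ {ω | Γ / φ < G ω * Pj ω}).toReal =
      if 0 ≤ Γ then
        Real.exp (-Γ / (φ * Pmax)) + Γ / (φ * Pmax) * Ei (-(Γ / (φ * Pmax)))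
      else 1 := by
  set c : ℝ := Γ / φ with hc_def
  -- the case of nonpositive c : probability 1
  have hone : c ≤ 0 → μ {ω | c < G ω * Pj ω} = 1 := by
    intro hc
    have hG0 : μ {ω | G ω ≤ 0} = 0 := by
      have : {ω | G ω ≤ 0} = G ⁻¹' (Iic 0) := rfl
      rw [this, ← Measure.map_apply hGm measurableSet_Iic, hG]
      show (volume.withDensity (exponentialPDF 1)) (Iic 0) = 0
      rw [withDensity_apply _ measurableSet_Iic, setLIntegral_congr Iio_ae_eq_Iic.symm,
        lintegral_exponentialPDF_of_nonpos le_rfl]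
    have hPj0 : μ {ω | Pj ω ≤ 0} = 0 := by
      have hns : volume (Icc (0:ℝ) Pmax) ≠ 0 := by
        rw [Real.volume_Icc]; simp [hPmax, hPmax.le]
      have hnt : volume (Icc (0:ℝ) Pmax) ≠ ∞ := by
        rw [Real.volume_Icc]; exact ENNReal.ofReal_ne_top
      have : {ω | Pj ω ≤ 0} = Pj ⁻¹' (Iic 0) := rfl
      rw [this, pdf.IsUniform.measure_preimage hns hnt hPj measurableSet_Iic]
      have : Icc (0:ℝ) Pmax ∩ Iic 0 = {0} := by
        ext y
        simp only [mem_inter_iff, mem_Icc, mem_Iic, mem_singleton_iff]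
        constructor
        · rintro ⟨⟨h1, _⟩, h2⟩; linarith
        · rintro rfl; exact ⟨⟨le_rfl, hPmax.le⟩, le_rfl⟩
      rw [this, Real.volume_singleton, ENNReal.zero_div]
    have hsub : {ω | G ω * Pj ω ≤ c} ⊆ {ω | G ω ≤ 0} ∪ {ω | Pj ω ≤ 0} := by
      intro ω hω
      by_contra h
      simp only [mem_union, mem_setOf_eq, not_or, not_le] at h
      have : 0 < G ω * Pj ω := mul_pos h.1 h.2
      simp only [mem_setOf_eq] at hω
      linarith
    have hcompl : μ {ω | G ω * Pj ω ≤ c} = 0 :=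
      measure_mono_null hsub (measure_union_null hG0 hPj0)
    have hset : {ω | c < G ω * Pj ω} = {ω | G ω * Pj ω ≤ c}ᶜ := by
      ext ω; simp [not_le]
    rw [hset, prob_compl_eq_one_iff (measurableSet_le (f := fun ω => G ω * Pj ω) (hGm.mul hPjm) measurable_const)]
    exact hcompl
  by_cases hΓ : 0 ≤ Γ
  · rw [if_pos hΓ]
    rcases eq_or_lt_of_le hΓ with hΓ0 | hΓpos
    · rw [hone (by rw [hc_def, ← hΓ0, zero_div])]
      simp [← hΓ0]
    · -- main case
      have hc : 0 < c := div_pos hΓpos hφ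
      set a : ℝ := c / Pmax with ha_def
      have ha : 0 < a := div_pos hc hPmax
      have hS : MeasurableSet {p : ℝ × ℝ | c < p.1 * p.2} :=
        measurableSet_lt measurable_const (measurable_fst.mul measurable_snd)
      have hmap : μ {ω | c < G ω * Pj ω}
          = (μ.map (fun ω => (G ω, Pj ω))) {p : ℝ × ℝ | c < p.1 * p.2} := by
        rw [Measure.map_apply (hGm.prodMk hPjm) hS]
        rfl
      rw [hmap,
        (indepFun_iff_map_prod_eq_prod_map_map hGm.aemeasurable hPjm.aemeasurable).mp hind,
        hG, hPj, aux_prod Pmax c hPmax hc]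
      have hnn : 0 ≤ ∫ x in Ioi a, (1 - a / x) * Real.exp (-x) := by
        refine setIntegral_nonneg measurableSet_Ioi fun x hx => ?_
        have hx0 : 0 < x := ha.trans hx
        have : a / x ≤ 1 := by rw [div_le_one hx0]; exact hx.le
        exact mul_nonneg (by linarith) (Real.exp_pos _).le
      rw [ENNReal.toReal_ofReal hnn, aux_key a ha]
      have haeq : a = Γ / (φ * Pmax) := by rw [ha_def, hc_def, div_div]
      rw [haeq, neg_div]
  · rw [if_neg hΓ]
    push_neg at hΓ
    rw [hone (le_of_lt (div_neg_of_neg_of_pos hΓ hφ))]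
    simp
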